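/- arXiv:2012.08735 — 3 statements merged into one kernel-verified Lean document; each statement's English description precedes it below -/
import Mathlib

section
/- For any function f : {-1,1}^n → {-1,1}, noise rate p ∈ (0,1), and coordinate i, the score of coordinate i is nonnegative: NS_p(f) − E_{b ∈ {-1,1}}[NS_p(f_{x_i = b})] ≥ 0. -/
open Finset

attribute [local instance] Classical.propDecidable

namespace DTR

noncomputable section

/-- ±1 real value of a Boolean. -/
def toR (b : Bool) : ℝ := if b then 1 else -1

/-- Average (expectation under the uniform distribution) of a real-valued
function on `{-1,1}^n` (encoded as `Fin n → Bool`). -/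
def avg (n : ℕ) (g : (Fin n → Bool) → ℝ) : ℝ := (∑ x : Fin n → Bool, g x) / 2 ^ n

/-- Mean `E[f]` of a ±1-valued Boolean function. -/
def mean (n : ℕ) (f : (Fin n → Bool) → Bool) : ℝ := avg n fun x => toR (f x)

/-- Sign of a real number, as ±1 (with sign(0) = 1). -/
def sgn (e : ℝ) : ℝ := if 0 ≤ e then 1 else -1

/-- Normalized Hamming distance `Pr_x[f(x) ≠ g(x)]` under the uniform distribution. -/
def distB (n : ℕ) (f g : (Fin n → Bool) → Bool) : ℝ :=
  avg n fun x => if f x = g x then 0 else 1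

/-- The `p`-noisy copy of `x` determined by the rerandomization pattern `r`
(coordinates where `r i = true` are rerandomized) and fresh bits `z`. -/
def noisy (n : ℕ) (x r z : Fin n → Bool) : Fin n → Bool := fun i => if r i then z i else x i

/-- Probability of the rerandomization pattern `r` at noise rate `p`. -/
def wt (n : ℕ) (p : ℝ) (r : Fin n → Bool) : ℝ := ∏ i : Fin n, (if r i then p else 1 - p)

/-- Noise sensitivity `NS_p(f) = Pr[f(x) ≠ f(y)]`, `x` uniform, `y` a `p`-noisy copy of `x`. -/
def NS (n : ℕ) (p : ℝ) (f : (Fin n → Bool) → Bool) : ℝ :=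
  (∑ x : Fin n → Bool, ∑ r : Fin n → Bool, ∑ z : Fin n → Bool,
      wt n p r * (if f x = f (noisy n x r z) then 0 else 1)) / (2 ^ n * 2 ^ n)

/-- Restriction `f_{x_i = b}` of `f`, fixing coordinate `i` to `b`. -/
def restr (n : ℕ) (f : (Fin n → Bool) → Bool) (i : Fin n) (b : Bool) :
    (Fin n → Bool) → Bool := fun x => f (Function.update x i b)

/-- `Score_i(f,p) = NS_p(f) − E_b[NS_p(f_{x_i=b})]`. -/
def score (n : ℕ) (p : ℝ) (f : (Fin n → Bool) → Bool) (i : Fin n) : ℝ :=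
  NS n p f - (NS n p (restr n f i true) + NS n p (restr n f i false)) / 2

/-- Discrete derivative `D_i g(x) = (g(x^{i=1}) − g(x^{i=-1}))/2` of a real-valued function. -/
def Dder (n : ℕ) (g : (Fin n → Bool) → ℝ) (i : Fin n) (x : Fin n → Bool) : ℝ :=
  (g (Function.update x i true) - g (Function.update x i false)) / 2

/-- `p`-smoothed version `f̃(x) = E_{y ∼_p x}[f(y)]` of a Boolean function `f`. -/
def smooth (n : ℕ) (p : ℝ) (f : (Fin n → Bool) → Bool) (x : Fin n → Bool) : ℝ :=
  (∑ r : Fin n → Bool, ∑ z : Fin n → Bool, wt n p r * toR (f (noisy n x r z))) / 2 ^ n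

/-- Fourier coefficient `f̂(S) = E[f(x) · χ_S(x)]`. -/
def fourier (n : ℕ) (f : (Fin n → Bool) → Bool) (S : Finset (Fin n)) : ℝ :=
  avg n fun x => toR (f x) * ∏ i ∈ S, toR (x i)

/-- Total influence `Inf(g) = Σ_i Pr[g(x) ≠ g(x^{⊕i})]`. -/
def totalInf (n : ℕ) (g : (Fin n → Bool) → Bool) : ℝ :=
  ∑ i : Fin n, avg n fun x => if g x = g (Function.update x i (!x i)) then 0 else 1

/-- Decision trees over `{-1,1}^n`. -/
inductive DTree (n : ℕ) where
  | leaf : Bool → DTree n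
  | node : Fin n → DTree n → DTree n → DTree n

namespace DTree

def eval {n : ℕ} : DTree n → (Fin n → Bool) → Bool
  | .leaf b, _ => b
  | .node i l r, x => if x i then eval r x else eval l x

/-- Number of leaves (the size of the tree). -/
def leaves {n : ℕ} : DTree n → ℕ
  | .leaf _ => 1
  | .node _ l r => leaves l + leaves r

/-- Depth of the leaf reached by input `x`. -/
def depthOn {n : ℕ} : DTree n → (Fin n → Bool) → ℕ
  | .leaf _, _ => 0
  | .node i l r, x => (if x i then depthOn r x else depthOn l x) + 1

/-- Whether the tree queries variable `i` on input `x`. -/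
def queries {n : ℕ} : DTree n → (Fin n → Bool) → Fin n → Bool
  | .leaf _, _, _ => false
  | .node j l r, x, i => (i == j) || (if x j then queries r x i else queries l x i)

/-- The tree never re-queries a variable already queried on the path
(given the set `s` of forbidden variables). -/
def noRepeat {n : ℕ} : DTree n → Finset (Fin n) → Prop
  | .leaf _, _ => True
  | .node i l r, s => i ∉ s ∧ noRepeat l (insert i s) ∧ noRepeat r (insert i s)

def depth {n : ℕ} : DTree n → ℕ
  | .leaf _ => 0
  | .node _ l r => max (depth l) (depth r) + 1

end DTree

/-- `opt_s(g)`: distance of `g` to the closest decision tree of size at most `s`. -/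
def opt (n : ℕ) (s : ℕ) (g : (Fin n → Bool) → Bool) : ℝ :=
  sInf {e : ℝ | ∃ T : DTree n, T.leaves ≤ s ∧ distB n g T.eval = e}


lemma indicator_eq (a b : Bool) :
    (if a = b then (0:ℝ) else 1) = (1 - toR a * toR b) / 2 := by
  cases a <;> cases b <;> simp [toR]

lemma sum_update {n : ℕ} (i : Fin n) (u : (Fin n → Bool) → ℝ) :
    ∑ x : Fin n → Bool, (u (Function.update x i true) + u (Function.update x i false))
      = 2 * ∑ x : Fin n → Bool, u x := by
  have hinv : Function.Involutive (fun x : Fin n → Bool => Function.update x i (!x i)) := by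
    intro x; funext j
    by_cases hj : j = i
    · subst hj; simp
    · simp [Function.update_of_ne hj]
  have hflip : ∑ x : Fin n → Bool, u (Function.update x i (!x i))
      = ∑ x : Fin n → Bool, u x := Equiv.sum_comp hinv.toPerm u
  have hstep : ∑ x : Fin n → Bool, (u (Function.update x i true) + u (Function.update x i false))
      = ∑ x : Fin n → Bool, (u (Function.update x i (x i)) + u (Function.update x i (!x i))) := by
    refine Finset.sum_congr rfl fun x _ => ?_
    cases hxi : x i <;> simp [hxi, add_comm]
  rw [hstep, Finset.sum_add_distrib, hflip]
  simp [Function.update_eq_self, two_mul]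

lemma sum_update' {n : ℕ} (i : Fin n) (u : (Fin n → Bool) → ℝ) :
    ∑ x : Fin n → Bool, ∑ b : Bool, u (Function.update x i b) = 2 * ∑ x : Fin n → Bool, u x := by
  rw [← sum_update i u]
  exact Finset.sum_congr rfl fun x _ => by rw [Fintype.sum_bool]

lemma sum_update3 {n : ℕ} (i : Fin n)
    (u : (Fin n → Bool) → (Fin n → Bool) → (Fin n → Bool) → ℝ) :
    ∑ x : Fin n → Bool, ∑ r : Fin n → Bool, ∑ z : Fin n → Bool,
      ∑ b : Bool, ∑ d : Bool, ∑ c : Bool,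
        u (Function.update x i b) (Function.update r i d) (Function.update z i c)
    = 8 * ∑ x : Fin n → Bool, ∑ r : Fin n → Bool, ∑ z : Fin n → Bool, u x r z := by
  have hz : ∀ x r : Fin n → Bool, ∑ z : Fin n → Bool, ∑ b : Bool, ∑ d : Bool, ∑ c : Bool,
      u (Function.update x i b) (Function.update r i d) (Function.update z i c)
      = ∑ b : Bool, ∑ d : Bool,
          2 * ∑ z : Fin n → Bool, u (Function.update x i b) (Function.update r i d) z := by
    intro x r
    rw [Finset.sum_comm]
    refine Finset.sum_congr rfl fun b _ => ?_
    rw [Finset.sum_comm]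
    exact Finset.sum_congr rfl fun d _ =>
      sum_update' i (fun z => u (Function.update x i b) (Function.update r i d) z)
  have hr : ∀ x : Fin n → Bool, ∑ r : Fin n → Bool, ∑ b : Bool, ∑ d : Bool,
      2 * ∑ z : Fin n → Bool, u (Function.update x i b) (Function.update r i d) z
      = ∑ b : Bool, 4 * ∑ r : Fin n → Bool, ∑ z : Fin n → Bool,
          u (Function.update x i b) r z := by
    intro x
    rw [Finset.sum_comm]
    refine Finset.sum_congr rfl fun b _ => ?_
    have h2 : ∑ r : Fin n → Bool, ∑ d : Bool,
        (∑ z : Fin n → Bool, u (Function.update x i b) (Function.update r i d) z)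
        = 2 * ∑ r : Fin n → Bool, ∑ z : Fin n → Bool, u (Function.update x i b) r z :=
      sum_update' i (fun r => ∑ z : Fin n → Bool, u (Function.update x i b) r z)
    calc ∑ r : Fin n → Bool, ∑ d : Bool,
          2 * ∑ z : Fin n → Bool, u (Function.update x i b) (Function.update r i d) z
        = 2 * ∑ r : Fin n → Bool, ∑ d : Bool,
            (∑ z : Fin n → Bool, u (Function.update x i b) (Function.update r i d) z) := by
          simp only [← Finset.mul_sum]
      _ = 4 * ∑ r : Fin n → Bool, ∑ z : Fin n → Bool, u (Function.update x i b) r z := by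
          rw [h2]; ring
  calc ∑ x : Fin n → Bool, ∑ r : Fin n → Bool, ∑ z : Fin n → Bool,
        ∑ b : Bool, ∑ d : Bool, ∑ c : Bool,
          u (Function.update x i b) (Function.update r i d) (Function.update z i c)
      = ∑ x : Fin n → Bool, ∑ r : Fin n → Bool, ∑ b : Bool, ∑ d : Bool,
          2 * ∑ z : Fin n → Bool, u (Function.update x i b) (Function.update r i d) z := by
        exact Finset.sum_congr rfl fun x _ => Finset.sum_congr rfl fun r _ => hz x r
    _ = ∑ x : Fin n → Bool, ∑ b : Bool, 4 * ∑ r : Fin n → Bool, ∑ z : Fin n → Bool,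
          u (Function.update x i b) r z := Finset.sum_congr rfl fun x _ => hr x
    _ = 4 * ∑ x : Fin n → Bool, ∑ b : Bool,
          (∑ r : Fin n → Bool, ∑ z : Fin n → Bool, u (Function.update x i b) r z) := by
        simp only [← Finset.mul_sum]
    _ = 4 * (2 * ∑ x : Fin n → Bool, ∑ r : Fin n → Bool, ∑ z : Fin n → Bool, u x r z) := by
        rw [sum_update' i (fun x => ∑ r : Fin n → Bool, ∑ z : Fin n → Bool, u x r z)]
    _ = _ := by ring

lemma noisy_update {n : ℕ} (i : Fin n) (b d c : Bool) (x r z : Fin n → Bool) :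
    noisy n (Function.update x i b) (Function.update r i d) (Function.update z i c)
      = Function.update (noisy n x r z) i (if d then c else b) := by
  funext j
  by_cases hj : j = i
  · subst hj; simp [noisy]
  · simp [noisy, Function.update_of_ne hj]

lemma wt_update {n : ℕ} (p : ℝ) (i : Fin n) (d : Bool) (r : Fin n → Bool) :
    wt n p (Function.update r i d)
      = (if d then p else 1 - p) * ∏ j ∈ Finset.univ.erase i, (if r j then p else 1 - p) := by
  unfold wt
  have h : (fun j => if Function.update r i d j then p else 1 - p)
      = Function.update (fun j => if r j then p else 1 - p) i (if d then p else 1 - p) := by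
    funext j
    by_cases hj : j = i
    · subst hj; simp
    · simp [Function.update_of_ne hj]
  calc ∏ j : Fin n, (if Function.update r i d j then p else 1 - p)
      = ∏ j : Fin n, Function.update (fun j => if r j then p else 1 - p) i
          (if d then p else 1 - p) j := by rw [h]
    _ = (if d then p else 1 - p) * ∏ j ∈ Finset.univ \ {i}, (if r j then p else 1 - p) :=
      Finset.prod_update_of_mem (Finset.mem_univ i) _ _
    _ = _ := by rw [Finset.sdiff_singleton_eq_erase]

lemma pos_part {n : ℕ} (r : Fin n → Bool) (h : (Fin n → Bool) → ℝ) :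
    0 ≤ ∑ x : Fin n → Bool, ∑ z : Fin n → Bool, h x * h (noisy n x r z) := by
  classical
  set p : Fin n → Prop := fun j => r j = true with hp
  let e : ((∀ j : {j // p j}, Bool) × ∀ j : {j // ¬ p j}, Bool) ≃ (Fin n → Bool) :=
    (Equiv.piEquivPiSubtypeProd p (fun _ => Bool)).symm
  set H : (∀ j : {j // p j}, Bool) → (∀ j : {j // ¬ p j}, Bool) → ℝ :=
    fun a b => h (e (a, b)) with hH
  have hnoisy : ∀ (a c : ∀ j : {j // p j}, Bool) (b d : ∀ j : {j // ¬ p j}, Bool),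
      noisy n (e (a, b)) r (e (c, d)) = e (c, b) := by
    intro a c b d; funext j
    by_cases hj : p j
    · have hrj : r j = true := hj
      simp [noisy, e, Equiv.piEquivPiSubtypeProd, hrj, hj]
    · have hrj : r j = false := by simpa [hp] using hj
      simp [noisy, e, Equiv.piEquivPiSubtypeProd, hrj, hj]
  rw [← Equiv.sum_comp e (fun x => ∑ z : Fin n → Bool, h x * h (noisy n x r z))]
  have inner : ∀ q, (fun x => ∑ z : Fin n → Bool, h x * h (noisy n x r z)) (e q)
      = ∑ q' : ((∀ j : {j // p j}, Bool) × ∀ j : {j // ¬ p j}, Bool),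
          h (e q) * h (noisy n (e q) r (e q')) :=
    fun q => (Equiv.sum_comp e fun z => h (e q) * h (noisy n (e q) r z)).symm
  rw [Fintype.sum_congr _ _ inner, Fintype.sum_prod_type]
  have key : ∀ a b, ∑ q' : ((∀ j : {j // p j}, Bool) × ∀ j : {j // ¬ p j}, Bool),
      h (e (a, b)) * h (noisy n (e (a, b)) r (e q'))
      = (Fintype.card (∀ j : {j // ¬ p j}, Bool) : ℝ) * ∑ c, H a b * H c b := by
    intro a b
    rw [Fintype.sum_prod_type]
    calc ∑ c, ∑ d, h (e (a,b)) * h (noisy n (e (a,b)) r (e (c,d)))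
        = ∑ c, ∑ _d : (∀ j : {j // ¬ p j}, Bool), H a b * H c b :=
          Finset.sum_congr rfl fun c _ => Finset.sum_congr rfl fun d _ => by
            rw [hnoisy]
      _ = ∑ c, (Fintype.card (∀ j : {j // ¬ p j}, Bool) : ℝ) * (H a b * H c b) := by
          simp [Finset.sum_const, card_univ, nsmul_eq_mul]
      _ = _ := by rw [← Finset.mul_sum]
  calc (0:ℝ) ≤ ∑ b, (Fintype.card (∀ j : {j // ¬ p j}, Bool) : ℝ) *
        ((∑ a, H a b) * (∑ a, H a b)) := by
        exact Finset.sum_nonneg fun b _ => mul_nonneg (Nat.cast_nonneg _) (mul_self_nonneg _)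
    _ = ∑ b, ∑ a, (Fintype.card (∀ j : {j // ¬ p j}, Bool) : ℝ) * ∑ c, H a b * H c b := by
        refine Finset.sum_congr rfl fun b _ => ?_
        rw [← Finset.mul_sum]; congr 1
        rw [Fintype.sum_mul_sum]
    _ = ∑ a, ∑ b, (Fintype.card (∀ j : {j // ¬ p j}, Bool) : ℝ) * ∑ c, H a b * H c b :=
        Finset.sum_comm
    _ = _ := by
        exact Finset.sum_congr rfl fun a _ => Finset.sum_congr rfl fun b _ => (key a b).symm

lemma comb3 {α : Type*} [Fintype α] (A B C : α → ℝ) :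
    (∑ a, A a) + (∑ a, B a) - 2 * (∑ a, C a) = ∑ a, (A a + B a - 2 * C a) := by
  rw [← Finset.sum_add_distrib, Finset.mul_sum, ← Finset.sum_sub_distrib]

def Q (n : ℕ) (p : ℝ) (f : (Fin n → Bool) → Bool) : ℝ :=
  ∑ x : Fin n → Bool, ∑ r : Fin n → Bool, ∑ z : Fin n → Bool,
    wt n p r * (toR (f x) * toR (f (noisy n x r z)))

lemma NS_eq (n : ℕ) (p : ℝ) (f : (Fin n → Bool) → Bool) :
    NS n p f = ((∑ x : Fin n → Bool, ∑ r : Fin n → Bool, ∑ z : Fin n → Bool, wt n p r)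
        - Q n p f) / (2 * (2 ^ n * 2 ^ n)) := by
  have hpt : ∀ x r z : Fin n → Bool,
      wt n p r * (if f x = f (noisy n x r z) then (0:ℝ) else 1)
      = (wt n p r - wt n p r * (toR (f x) * toR (f (noisy n x r z)))) / 2 := by
    intro x r z; rw [indicator_eq]; ring
  unfold NS Q
  simp only [hpt]
  simp only [← Finset.sum_div, Finset.sum_sub_distrib]
  ring

lemma key_ineq (n : ℕ) (p : ℝ) (hp0 : 0 < p) (hp1 : p < 1)
    (f : (Fin n → Bool) → Bool) (i : Fin n) :
    2 * Q n p f ≤ Q n p (restr n f i true) + Q n p (restr n f i false) := by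
  set g : Bool → (Fin n → Bool) → ℝ := fun b x => toR (f (Function.update x i b)) with hg
  set W : (Fin n → Bool) → ℝ :=
    fun r => ∏ j ∈ Finset.univ.erase i, (if r j then p else 1 - p) with hW
  set hd : (Fin n → Bool) → ℝ := fun x => g true x - g false x with hhd
  have hWnn : ∀ r, 0 ≤ W r := fun r =>
    Finset.prod_nonneg fun j _ => by split <;> linarith
  have E1 : 8 * Q n p f = ∑ x : Fin n → Bool, ∑ r : Fin n → Bool, ∑ z : Fin n → Bool,
      W r * (p * ((g true x + g false x)
          * (g true (noisy n x r z) + g false (noisy n x r z)))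
        + (1 - p) * (2 * (g true x * g true (noisy n x r z)
          + g false x * g false (noisy n x r z)))) := by
    unfold Q
    rw [← sum_update3 i (fun x r z => wt n p r * (toR (f x) * toR (f (noisy n x r z))))]
    refine Finset.sum_congr rfl fun x _ => Finset.sum_congr rfl fun r _ =>
      Finset.sum_congr rfl fun z _ => ?_
    simp only [Fintype.sum_bool, noisy_update, wt_update, hg, hW, hhd]
    norm_num
    ring
  have E2 : ∀ b : Bool, 8 * Q n p (restr n f i b)
      = ∑ x : Fin n → Bool, ∑ r : Fin n → Bool, ∑ z : Fin n → Bool,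
          4 * (W r * (g b x * g b (noisy n x r z))) := by
    intro b
    unfold Q
    rw [← sum_update3 i (fun x r z =>
      wt n p r * (toR (restr n f i b x) * toR (restr n f i b (noisy n x r z))))]
    refine Finset.sum_congr rfl fun x _ => Finset.sum_congr rfl fun r _ =>
      Finset.sum_congr rfl fun z _ => ?_
    simp only [Fintype.sum_bool, noisy_update, wt_update, restr, Function.update_idem,
      hg, hW]
    norm_num
    ring
  have hD : ∑ r : Fin n → Bool, (2 * p * W r)
        * ∑ x : Fin n → Bool, ∑ z : Fin n → Bool, hd x * hd (noisy n x r z)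
      = ∑ x : Fin n → Bool, ∑ r : Fin n → Bool, ∑ z : Fin n → Bool,
          (2 * p * W r) * (hd x * hd (noisy n x r z)) := by
    rw [Finset.sum_comm]
    refine Finset.sum_congr rfl fun r _ => ?_
    rw [Finset.mul_sum]
    exact Finset.sum_congr rfl fun x _ => Finset.mul_sum _ _ _
  have comb : 8 * Q n p (restr n f i true) + 8 * Q n p (restr n f i false)
      - 2 * (8 * Q n p f)
      = ∑ r : Fin n → Bool, (2 * p * W r)
          * ∑ x : Fin n → Bool, ∑ z : Fin n → Bool, hd x * hd (noisy n x r z) := by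
    rw [E1, E2 true, E2 false, hD, comb3]
    refine Finset.sum_congr rfl fun x _ => ?_
    rw [comb3]
    refine Finset.sum_congr rfl fun r _ => ?_
    rw [comb3]
    refine Finset.sum_congr rfl fun z _ => ?_
    rw [hhd]
    ring
  have pos : 0 ≤ 8 * Q n p (restr n f i true) + 8 * Q n p (restr n f i false)
      - 2 * (8 * Q n p f) := by
    rw [comb]
    refine Finset.sum_nonneg fun r _ => mul_nonneg ?_ (pos_part r hd)
    have := hWnn r
    nlinarith
  linarith

/-- scores are nonnegative:
`NS_p(f) − E_b[NS_p(f_{x_i=b})] ≥ 0`. -/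
theorem stmt4 (n : ℕ) (p : ℝ) (hp0 : 0 < p) (hp1 : p < 1)
    (f : (Fin n → Bool) → Bool) (i : Fin n) :
    0 ≤ score n p f i := by
  have key := key_ineq n p hp0 hp1 f i
  have hD : (0:ℝ) < (2:ℝ) ^ n * 2 ^ n := by positivity
  unfold score
  rw [NS_eq, NS_eq, NS_eq]
  rw [← add_div, div_div]
  have expr : ((∑ x : Fin n → Bool, ∑ r : Fin n → Bool, ∑ z : Fin n → Bool, wt n p r)
        - Q n p f) / (2 * (2 ^ n * 2 ^ n))
      - (((∑ x : Fin n → Bool, ∑ r : Fin n → Bool, ∑ z : Fin n → Bool, wt n p r)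
          - Q n p (restr n f i true))
        + ((∑ x : Fin n → Bool, ∑ r : Fin n → Bool, ∑ z : Fin n → Bool, wt n p r)
          - Q n p (restr n f i false))) / (2 * (2 ^ n * 2 ^ n) * 2)
      = ((Q n p (restr n f i true) + Q n p (restr n f i false)) - 2 * Q n p f)
        / (4 * (2 ^ n * 2 ^ n)) := by
    field_simp
    ring
  rw [expr]
  apply div_nonneg
  · linarith
  · positivity

end

end DTR
end

section
/- The output of the unbiased score estimator is correct in expectation: for f : {-1,1}^n → {-1,1}, p ∈ (0,1), x uniform, y a p-noisy copy of x, and η_i = 1[f(x) ≠ f(y)] · (1 − (1/(1 − p/2)) · 1[x_i = y_i]), one has E[η_i] = Score_i(f, p) for every i ∈ [n]. -/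
open Finset

attribute [local instance] Classical.propDecidable

namespace DTR

noncomputable section

/-- Product of the noise weights over all coordinates except `i`. -/
def wtE (n : ℕ) (p : ℝ) (i : Fin n) (r : Fin n → Bool) : ℝ :=
  ∏ j ∈ Finset.univ.erase i, (if r j then p else 1 - p)

/-- The disagreement indicator of the restricted function. -/
def QQ (n : ℕ) (f : (Fin n → Bool) → Bool) (i : Fin n) (b : Bool) (x r z : Fin n → Bool) : ℝ :=
  if f (Function.update x i b) = f (Function.update (noisy n x r z) i b) then 0 else 1

lemma sum_update_pair {n : ℕ} (i : Fin n) (h : (Fin n → Bool) → ℝ) :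
    ∑ x : Fin n → Bool, (h (Function.update x i true) + h (Function.update x i false))
      = 2 * ∑ x : Fin n → Bool, h x := by
  have hkey : ∀ x : Fin n → Bool,
      h (Function.update x i true) + h (Function.update x i false)
        = h x + h (Function.update x i (!x i)) := by
    intro x
    cases hx : x i with
    | false =>
        have h1 : Function.update x i false = x := by
          conv_lhs => rw [← hx]
          exact Function.update_eq_self i x
        rw [h1]
        simp [add_comm]
    | true =>
        have h1 : Function.update x i true = x := by
          conv_lhs => rw [← hx]
          exact Function.update_eq_self i x
        rw [h1]
        simp
  have hσ : Function.Involutive (fun x : Fin n → Bool => Function.update x i (!x i)) := by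
    intro x
    simp [Function.update_idem, Function.update_self, Bool.not_not, Function.update_eq_self]
  calc ∑ x : Fin n → Bool, (h (Function.update x i true) + h (Function.update x i false))
      = ∑ x : Fin n → Bool, (h x + h (Function.update x i (!x i))) :=
        Finset.sum_congr rfl fun x _ => hkey x
    _ = (∑ x : Fin n → Bool, h x)
        + ∑ x : Fin n → Bool, h (Function.update x i (!x i)) := Finset.sum_add_distrib
    _ = 2 * ∑ x : Fin n → Bool, h x := by
        rw [Fintype.sum_bijective _ hσ.bijective
          (fun x => h (Function.update x i (!x i))) h (fun x => rfl)]
        ring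

lemma update_congr' {n : ℕ} (i : Fin n) (b : Bool) {x x' : Fin n → Bool}
    (h : ∀ j, j ≠ i → x' j = x j) : Function.update x' i b = Function.update x i b := by
  funext j
  rcases eq_or_ne j i with rfl | hj
  · simp
  · rw [Function.update_of_ne hj, Function.update_of_ne hj, h j hj]

lemma QQ_congr {n : ℕ} (f : (Fin n → Bool) → Bool) (i : Fin n) (b : Bool)
    {x r z x' r' z' : Fin n → Bool}
    (hx : ∀ j, j ≠ i → x' j = x j) (hr : ∀ j, j ≠ i → r' j = r j)
    (hz : ∀ j, j ≠ i → z' j = z j) :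
    QQ n f i b x' r' z' = QQ n f i b x r z := by
  have h2 : ∀ j, j ≠ i → noisy n x' r' z' j = noisy n x r z j := by
    intro j hj; simp [noisy, hx j hj, hr j hj, hz j hj]
  unfold QQ
  rw [update_congr' i b hx, update_congr' i b h2]

lemma upd_ne {n : ℕ} (i : Fin n) (v : Fin n → Bool) (a : Bool) :
    ∀ j, j ≠ i → Function.update v i a j = v j := fun j hj => Function.update_of_ne hj a v

lemma self_ne {n : ℕ} (i : Fin n) (v : Fin n → Bool) : ∀ j, j ≠ i → v j = v j :=
  fun _ _ => rfl

lemma wt_update_eq (n : ℕ) (p : ℝ) (i : Fin n) (r : Fin n → Bool) (d : Bool) :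
    wt n p (Function.update r i d) = (if d then p else 1 - p) * wtE n p i r := by
  unfold wt wtE
  rw [← Finset.mul_prod_erase Finset.univ _ (Finset.mem_univ i)]
  congr 1
  · rw [Function.update_self]
  · exact Finset.prod_congr rfl fun j hj => by
      rw [Function.update_of_ne (Finset.ne_of_mem_erase hj)]

lemma restr_sum (n : ℕ) (p : ℝ) (f : (Fin n → Bool) → Bool) (i : Fin n) (b : Bool) :
    NS n p (restr n f i b)
      = (∑ x : Fin n → Bool, ∑ r : Fin n → Bool, ∑ z : Fin n → Bool,
          wt n p r * QQ n f i b x r z) / (2 ^ n * 2 ^ n) := rfl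

lemma L1 (n : ℕ) (p : ℝ) (f : (Fin n → Bool) → Bool) (i : Fin n) (b : Bool) :
    2 * (∑ x : Fin n → Bool, ∑ r : Fin n → Bool, ∑ z : Fin n → Bool,
        wt n p r * QQ n f i b x r z)
      = ∑ x : Fin n → Bool, ∑ r : Fin n → Bool, ∑ z : Fin n → Bool,
        wtE n p i r * QQ n f i b x r z := by
  rw [Finset.mul_sum]
  refine Finset.sum_congr rfl fun x _ => ?_
  rw [← sum_update_pair i (fun r => ∑ z : Fin n → Bool, wt n p r * QQ n f i b x r z)]
  refine Finset.sum_congr rfl fun r _ => ?_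
  rw [← Finset.sum_add_distrib]
  refine Finset.sum_congr rfl fun z _ => ?_
  rw [wt_update_eq, wt_update_eq,
      QQ_congr f i b (self_ne i x) (upd_ne i r true) (self_ne i z),
      QQ_congr f i b (self_ne i x) (upd_ne i r false) (self_ne i z)]
  norm_num
  try ring

lemma L2 (n : ℕ) (p : ℝ) (f : (Fin n → Bool) → Bool) (i : Fin n) :
    8 * (∑ x : Fin n → Bool, ∑ r : Fin n → Bool, ∑ z : Fin n → Bool,
        wt n p r * ((if f x = f (noisy n x r z) then (0:ℝ) else 1) *
          (if x i = noisy n x r z i then (1:ℝ) else 0)))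
      = (2 - p) * ∑ x : Fin n → Bool, ∑ r : Fin n → Bool, ∑ z : Fin n → Bool,
        wtE n p i r * (QQ n f i true x r z + QQ n f i false x r z) := by
  have P1 : ∀ x r z : Fin n → Bool,
      (if f x = f (noisy n x r z) then (0:ℝ) else 1)
          * (if x i = noisy n x r z i then (1:ℝ) else 0)
        = QQ n f i (x i) x r z * (if x i = noisy n x r z i then (1:ℝ) else 0) := by
    intro x r z
    by_cases h : x i = noisy n x r z i
    · have h1 : Function.update x i (x i) = x := Function.update_eq_self i x
      have h2 : Function.update (noisy n x r z) i (x i) = noisy n x r z := by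
        rw [h]; exact Function.update_eq_self i _
      unfold QQ
      rw [h1, h2]
    · simp [h]
  have e0 : (∑ x : Fin n → Bool, ∑ r : Fin n → Bool, ∑ z : Fin n → Bool,
        wt n p r * ((if f x = f (noisy n x r z) then (0:ℝ) else 1) *
          (if x i = noisy n x r z i then (1:ℝ) else 0)))
      = ∑ x : Fin n → Bool, ∑ r : Fin n → Bool, ∑ z : Fin n → Bool,
        wt n p r * (QQ n f i (x i) x r z *
          (if x i = noisy n x r z i then (1:ℝ) else 0)) := by
    refine Finset.sum_congr rfl fun x _ => Finset.sum_congr rfl fun r _ =>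
      Finset.sum_congr rfl fun z _ => ?_
    rw [P1 x r z]
  have step2 : 2 * (∑ x : Fin n → Bool, ∑ r : Fin n → Bool, ∑ z : Fin n → Bool,
        wt n p r * (QQ n f i (x i) x r z *
          (if x i = noisy n x r z i then (1:ℝ) else 0)))
      = ∑ x : Fin n → Bool, ∑ r : Fin n → Bool, ∑ z : Fin n → Bool,
        wt n p r * (QQ n f i (x i) x r z * (if r i then (1:ℝ) else 2)) := by
    rw [Finset.mul_sum]
    refine Finset.sum_congr rfl fun x _ => ?_
    rw [Finset.mul_sum]
    refine Finset.sum_congr rfl fun r _ => ?_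
    rw [← sum_update_pair i (fun z => wt n p r * (QQ n f i (x i) x r z *
        (if x i = noisy n x r z i then (1:ℝ) else 0)))]
    refine Finset.sum_congr rfl fun z _ => ?_
    rw [QQ_congr f i (x i) (self_ne i x) (self_ne i r) (upd_ne i z true),
        QQ_congr f i (x i) (self_ne i x) (self_ne i r) (upd_ne i z false)]
    have hyt : noisy n x r (Function.update z i true) i = (if r i then true else x i) := by
      simp [noisy]
    have hyf : noisy n x r (Function.update z i false) i = (if r i then false else x i) := by
      simp [noisy]
    rw [hyt, hyf]
    cases hr : r i <;> cases hx : x i <;> simp [hx] <;> ring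
  have step3 : 2 * (∑ x : Fin n → Bool, ∑ r : Fin n → Bool, ∑ z : Fin n → Bool,
        wt n p r * (QQ n f i (x i) x r z * (if r i then (1:ℝ) else 2)))
      = (2 - p) * ∑ x : Fin n → Bool, ∑ r : Fin n → Bool, ∑ z : Fin n → Bool,
        wtE n p i r * QQ n f i (x i) x r z := by
    rw [Finset.mul_sum, Finset.mul_sum]
    refine Finset.sum_congr rfl fun x _ => ?_
    rw [← sum_update_pair i (fun r => ∑ z : Fin n → Bool,
        wt n p r * (QQ n f i (x i) x r z * (if r i then (1:ℝ) else 2))), Finset.mul_sum]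
    refine Finset.sum_congr rfl fun r _ => ?_
    rw [← Finset.sum_add_distrib, Finset.mul_sum]
    refine Finset.sum_congr rfl fun z _ => ?_
    rw [wt_update_eq, wt_update_eq,
        QQ_congr f i (x i) (self_ne i x) (upd_ne i r true) (self_ne i z),
        QQ_congr f i (x i) (self_ne i x) (upd_ne i r false) (self_ne i z),
        Function.update_self, Function.update_self]
    norm_num
    try ring
  have step4 : 2 * (∑ x : Fin n → Bool, ∑ r : Fin n → Bool, ∑ z : Fin n → Bool,
        wtE n p i r * QQ n f i (x i) x r z)
      = ∑ x : Fin n → Bool, ∑ r : Fin n → Bool, ∑ z : Fin n → Bool,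
        wtE n p i r * (QQ n f i true x r z + QQ n f i false x r z) := by
    rw [← sum_update_pair i (fun x => ∑ r : Fin n → Bool, ∑ z : Fin n → Bool,
        wtE n p i r * QQ n f i (x i) x r z)]
    refine Finset.sum_congr rfl fun x _ => ?_
    simp only [Function.update_self]
    rw [← Finset.sum_add_distrib]
    refine Finset.sum_congr rfl fun r _ => ?_
    rw [← Finset.sum_add_distrib]
    refine Finset.sum_congr rfl fun z _ => ?_
    rw [QQ_congr f i true (upd_ne i x true) (self_ne i r) (self_ne i z),
        QQ_congr f i false (upd_ne i x false) (self_ne i r) (self_ne i z)]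
    ring
  calc 8 * (∑ x : Fin n → Bool, ∑ r : Fin n → Bool, ∑ z : Fin n → Bool,
        wt n p r * ((if f x = f (noisy n x r z) then (0:ℝ) else 1) *
          (if x i = noisy n x r z i then (1:ℝ) else 0)))
      = 2 * (2 * (2 * (∑ x : Fin n → Bool, ∑ r : Fin n → Bool, ∑ z : Fin n → Bool,
          wt n p r * (QQ n f i (x i) x r z *
            (if x i = noisy n x r z i then (1:ℝ) else 0))))) := by rw [e0]; ring
    _ = 2 * (2 * (∑ x : Fin n → Bool, ∑ r : Fin n → Bool, ∑ z : Fin n → Bool,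
          wt n p r * (QQ n f i (x i) x r z * (if r i then (1:ℝ) else 2)))) := by rw [step2]
    _ = 2 * ((2 - p) * ∑ x : Fin n → Bool, ∑ r : Fin n → Bool, ∑ z : Fin n → Bool,
          wtE n p i r * QQ n f i (x i) x r z) := by rw [step3]
    _ = (2 - p) * (2 * (∑ x : Fin n → Bool, ∑ r : Fin n → Bool, ∑ z : Fin n → Bool,
          wtE n p i r * QQ n f i (x i) x r z)) := by ring
    _ = (2 - p) * ∑ x : Fin n → Bool, ∑ r : Fin n → Bool, ∑ z : Fin n → Bool,
          wtE n p i r * (QQ n f i true x r z + QQ n f i false x r z) := by rw [step4]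

/-- the unbiased score estimator
`η_i = 1[f(x) ≠ f(y)]·(1 − (1/(1−p/2))·1[x_i = y_i])` satisfies `E[η_i] = Score_i(f,p)`. -/
theorem stmt6 (n : ℕ) (p : ℝ) (hp0 : 0 < p) (hp1 : p < 1)
    (f : (Fin n → Bool) → Bool) (i : Fin n) :
    (∑ x : Fin n → Bool, ∑ r : Fin n → Bool, ∑ z : Fin n → Bool,
        wt n p r *
          ((if f x = f (noisy n x r z) then 0 else 1) *
            (1 - (1 / (1 - p / 2)) * (if x i = noisy n x r z i then 1 else 0)))) /
      (2 ^ n * 2 ^ n) = score n p f i := by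
  have hp2 : (1:ℝ) - p / 2 ≠ 0 := by nlinarith
  have hE : (∑ x : Fin n → Bool, ∑ r : Fin n → Bool, ∑ z : Fin n → Bool,
        wt n p r *
          ((if f x = f (noisy n x r z) then 0 else 1) *
            (1 - (1 / (1 - p / 2)) * (if x i = noisy n x r z i then 1 else 0))))
      = (∑ x : Fin n → Bool, ∑ r : Fin n → Bool, ∑ z : Fin n → Bool,
          wt n p r * (if f x = f (noisy n x r z) then (0:ℝ) else 1))
        - (1 / (1 - p / 2)) * (∑ x : Fin n → Bool, ∑ r : Fin n → Bool, ∑ z : Fin n → Bool,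
            wt n p r * ((if f x = f (noisy n x r z) then (0:ℝ) else 1) *
              (if x i = noisy n x r z i then (1:ℝ) else 0))) := by
    rw [Finset.mul_sum, ← Finset.sum_sub_distrib]
    refine Finset.sum_congr rfl fun x _ => ?_
    rw [Finset.mul_sum, ← Finset.sum_sub_distrib]
    refine Finset.sum_congr rfl fun r _ => ?_
    rw [Finset.mul_sum, ← Finset.sum_sub_distrib]
    refine Finset.sum_congr rfl fun z _ => ?_
    ring
  rw [hE]
  have hNSf : NS n p f = (∑ x : Fin n → Bool, ∑ r : Fin n → Bool, ∑ z : Fin n → Bool,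
      wt n p r * (if f x = f (noisy n x r z) then (0:ℝ) else 1)) / (2 ^ n * 2 ^ n) := rfl
  have hR : (∑ x : Fin n → Bool, ∑ r : Fin n → Bool, ∑ z : Fin n → Bool,
        wtE n p i r * (QQ n f i true x r z + QQ n f i false x r z))
      = (∑ x : Fin n → Bool, ∑ r : Fin n → Bool, ∑ z : Fin n → Bool,
          wtE n p i r * QQ n f i true x r z)
        + ∑ x : Fin n → Bool, ∑ r : Fin n → Bool, ∑ z : Fin n → Bool,
          wtE n p i r * QQ n f i false x r z := by
    rw [← Finset.sum_add_distrib]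
    refine Finset.sum_congr rfl fun x _ => ?_
    rw [← Finset.sum_add_distrib]
    refine Finset.sum_congr rfl fun r _ => ?_
    rw [← Finset.sum_add_distrib]
    exact Finset.sum_congr rfl fun z _ => mul_add _ _ _
  have h8 := L2 n p f i
  rw [hR, ← L1 n p f i true, ← L1 n p f i false] at h8
  set St := ∑ x : Fin n → Bool, ∑ r : Fin n → Bool, ∑ z : Fin n → Bool,
      wt n p r * QQ n f i true x r z with hSt
  set Sf := ∑ x : Fin n → Bool, ∑ r : Fin n → Bool, ∑ z : Fin n → Bool,
      wt n p r * QQ n f i false x r z with hSf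
  set T := ∑ x : Fin n → Bool, ∑ r : Fin n → Bool, ∑ z : Fin n → Bool,
      wt n p r * ((if f x = f (noisy n x r z) then (0:ℝ) else 1) *
        (if x i = noisy n x r z i then (1:ℝ) else 0)) with hT
  have hT4 : T = (2 - p) * (St + Sf) / 4 := by linear_combination h8 / 8
  have hcT : (1 / (1 - p / 2)) * T = (St + Sf) / 2 := by
    have h2 : (2 - p) * (St + Sf) / 4 = (1 - p / 2) * ((St + Sf) / 2) := by ring
    rw [hT4, h2, ← mul_assoc, one_div_mul_cancel hp2, one_mul]
  rw [score, hNSf, restr_sum n p f i true, restr_sum n p f i false, ← hSt, ← hSf, hcT]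
  ring

end

end DTR
end

section
/- Any decision tree T : {-1,1}^n → {-1,1} of size s (at most s leaves) has total influence Inf(T) := Σ_{i=1}^n Pr_x[T(x) ≠ T(x^{⊕i})] at most log₂ s, where x^{⊕i} denotes x with the i-th bit flipped. -/
open Finset

attribute [local instance] Classical.propDecidable

namespace DTR

noncomputable section

/-! ### Auxiliary machinery for Statement 11 -/

namespace DTree

/-- Prune a decision tree so that it never re-queries a variable already set
(recorded in `s` with values `v`). -/
def prune {n : ℕ} : DTree n → Finset (Fin n) → (Fin n → Bool) → DTree n
  | .leaf b, _, _ => .leaf b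
  | .node i l r, s, v =>
    if i ∈ s then (if v i then prune r s v else prune l s v)
    else .node i (prune l (insert i s) (Function.update v i false))
                 (prune r (insert i s) (Function.update v i true))

lemma leaves_pos {n : ℕ} (T : DTree n) : 1 ≤ T.leaves := by
  induction T with
  | leaf b => exact le_refl _
  | node i l r hl hr => simp only [leaves]; omega

lemma prune_leaves {n : ℕ} (T : DTree n) : ∀ s v, (prune T s v).leaves ≤ T.leaves := by
  induction T with
  | leaf b => intro s v; simp [prune, leaves]
  | node i l r hl hr =>
    intro s v
    by_cases h : i ∈ s
    · by_cases hv : v i = true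
      · simp only [prune, h, if_true, hv]
        calc (prune r s v).leaves ≤ r.leaves := hr s v
          _ ≤ (node i l r).leaves := by simp [leaves]
      · simp only [prune, h, if_true, hv, if_false]
        calc (prune l s v).leaves ≤ l.leaves := hl s v
          _ ≤ (node i l r).leaves := by simp [leaves]
    · simp only [prune, h, if_false, leaves]
      exact Nat.add_le_add (hl _ _) (hr _ _)

lemma prune_noRepeat {n : ℕ} (T : DTree n) : ∀ s v, (prune T s v).noRepeat s := by
  induction T with
  | leaf b => intro s v; simp [prune, noRepeat]
  | node i l r hl hr =>
    intro s v
    by_cases h : i ∈ s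
    · by_cases hv : v i = true
      · simpa only [prune, h, if_true, hv] using hr s v
      · simp only [prune, h, if_true, hv, if_false]; exact hl s v
    · simp only [prune, h, if_false, noRepeat]
      exact ⟨by simp [h], hl _ _, hr _ _⟩

lemma prune_eval {n : ℕ} (T : DTree n) :
    ∀ s v x, (∀ j ∈ s, x j = v j) → (prune T s v).eval x = T.eval x := by
  induction T with
  | leaf b => intro s v x hx; simp [prune, eval]
  | node i l r hl hr =>
    intro s v x hx
    by_cases h : i ∈ s
    · have hxi : x i = v i := hx i h
      by_cases hv : v i = true
      · simp only [prune, h, if_true, hv, eval, hxi]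
        exact hr s v x hx
      · have : v i = false := by simpa using hv
        simp only [prune, h, if_true, hv, if_false, eval, hxi, this]
        exact hl s v x hx
    · simp only [prune, h, if_false, eval]
      by_cases hxi : x i = true
      · simp only [hxi, if_true]
        refine hr _ _ x ?_
        intro j hj
        rcases Finset.mem_insert.mp hj with hj | hj
        · subst hj; simp [hxi]
        · rw [hx j hj]
          have : j ≠ i := fun e => h (e ▸ hj)
          simp [Function.update_of_ne this]
      · simp only [hxi, if_false]
        refine hl _ _ x ?_
        intro j hj
        rcases Finset.mem_insert.mp hj with hj | hj
        · subst hj; simp at hxi; simp [hxi]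
        · rw [hx j hj]
          have : j ≠ i := fun e => h (e ▸ hj)
          simp [Function.update_of_ne this]

lemma noRepeat_eval_update {n : ℕ} (T : DTree n) :
    ∀ s, T.noRepeat s → ∀ i ∈ s, ∀ x b, T.eval (Function.update x i b) = T.eval x := by
  induction T with
  | leaf b => intro s _ i _ x b'; simp [eval]
  | node j l r hl hr =>
    intro s hs i hi x b
    obtain ⟨hj, hsl, hsr⟩ := hs
    have hij : i ≠ j := fun e => hj (e ▸ hi)
    simp only [eval, Function.update_of_ne (Ne.symm hij)]
    by_cases hx : x j = true
    · simp only [hx, if_true]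
      exact hr _ hsr i (Finset.mem_insert_of_mem hi) x b
    · simp only [hx, if_false]
      exact hl _ hsl i (Finset.mem_insert_of_mem hi) x b

end DTree

/-- Influence of coordinate `i`. -/
def Infi (n : ℕ) (g : (Fin n → Bool) → Bool) (i : Fin n) : ℝ :=
  avg n fun x => if g x = g (Function.update x i (!x i)) then 0 else 1

lemma totalInf_eq_sum (n : ℕ) (g : (Fin n → Bool) → Bool) :
    totalInf n g = ∑ i : Fin n, Infi n g i := rfl

lemma card_cube (n : ℕ) : (Finset.univ : Finset (Fin n → Bool)).card = 2 ^ n := by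
  simp [Finset.card_univ]

lemma avg_nonneg' {n : ℕ} {f : (Fin n → Bool) → ℝ} (hf : ∀ x, 0 ≤ f x) : 0 ≤ avg n f := by
  unfold avg
  apply div_nonneg (Finset.sum_nonneg fun x _ => hf x) (by positivity)

lemma avg_le_one' {n : ℕ} {f : (Fin n → Bool) → ℝ} (hf : ∀ x, f x ≤ 1) : avg n f ≤ 1 := by
  unfold avg
  rw [div_le_one (by positivity)]
  calc ∑ x : Fin n → Bool, f x ≤ ∑ _x : Fin n → Bool, (1:ℝ) :=
        Finset.sum_le_sum fun x _ => hf x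
    _ = 2 ^ n := by simp [card_cube]

lemma Infi_le_one (n : ℕ) (g : (Fin n → Bool) → Bool) (i : Fin n) : Infi n g i ≤ 1 :=
  avg_le_one' fun x => by split <;> norm_num

lemma Infi_indep {n : ℕ} {g : (Fin n → Bool) → Bool} {i : Fin n}
    (hg : ∀ x b, g (Function.update x i b) = g x) : Infi n g i = 0 := by
  unfold Infi avg
  have : ∀ x : Fin n → Bool, (if g x = g (Function.update x i (!x i)) then (0:ℝ) else 1) = 0 := by
    intro x; simp [hg]
  simp [this]

lemma flip_involutive {n : ℕ} (i : Fin n) :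
    Function.Involutive (fun x : Fin n → Bool => Function.update x i (!x i)) := by
  intro x
  simp [Function.update_idem]

lemma sum_split {n : ℕ} (i : Fin n) (f g : (Fin n → Bool) → ℝ)
    (hf : ∀ x b, f (Function.update x i b) = f x)
    (hg : ∀ x b, g (Function.update x i b) = g x) :
    ∑ x : Fin n → Bool, (if x i then f x else g x)
      = (∑ x : Fin n → Bool, f x + ∑ x : Fin n → Bool, g x) / 2 := by
  set h : (Fin n → Bool) → ℝ := fun x => if x i then f x else g x with hh
  let e : Equiv.Perm (Fin n → Bool) := Function.Involutive.toPerm _ (flip_involutive i)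
  have h1 : ∑ x : Fin n → Bool, h (e x) = ∑ x : Fin n → Bool, h x :=
    Equiv.sum_comp e h
  have key : ∀ x : Fin n → Bool, h x + h (Function.update x i (!x i)) = f x + g x := by
    intro x
    by_cases hx : x i = true
    · have e1 : h x = f x := by simp [hh, hx]
      have e2 : h (Function.update x i (!x i)) = g (Function.update x i (!x i)) := by
        simp [hh, hx]
      rw [e1, e2, hg]
    · have hx' : x i = false := by simpa using hx
      have e1 : h x = g x := by simp [hh, hx']
      have e2 : h (Function.update x i (!x i)) = f (Function.update x i (!x i)) := by
        simp [hh, hx']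
      rw [e1, e2, hf]
      ring
  have h2 : ∑ x : Fin n → Bool, h x + ∑ x : Fin n → Bool, h x
      = ∑ x : Fin n → Bool, f x + ∑ x : Fin n → Bool, g x := by
    calc ∑ x : Fin n → Bool, h x + ∑ x : Fin n → Bool, h x
        = ∑ x : Fin n → Bool, h x + ∑ x : Fin n → Bool, h (e x) := by rw [h1]
      _ = ∑ x : Fin n → Bool, (h x + h (Function.update x i (!x i))) := by
          rw [← Finset.sum_add_distrib]; rfl
      _ = ∑ x : Fin n → Bool, (f x + g x) := Finset.sum_congr rfl fun x _ => key x
      _ = _ := Finset.sum_add_distrib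
  linarith

lemma Infi_node {n : ℕ} (i : Fin n) (l r : DTree n)
    (hl : ∀ x b, l.eval (Function.update x i b) = l.eval x)
    (hr : ∀ x b, r.eval (Function.update x i b) = r.eval x)
    (j : Fin n) (hj : j ≠ i) :
    Infi n (DTree.node i l r).eval j = (Infi n l.eval j + Infi n r.eval j) / 2 := by
  have hij : i ≠ j := Ne.symm hj
  set F : (Fin n → Bool) → ℝ :=
    fun x => if l.eval x = l.eval (Function.update x j (!x j)) then 0 else 1 with hF
  set G : (Fin n → Bool) → ℝ :=
    fun x => if r.eval x = r.eval (Function.update x j (!x j)) then 0 else 1 with hG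
  have hFind : ∀ x b, F (Function.update x i b) = F x := by
    intro x b
    have h1 : (Function.update x i b) j = x j := Function.update_of_ne hj b x
    simp only [hF, h1, Function.update_comm hij, hl]
  have hGind : ∀ x b, G (Function.update x i b) = G x := by
    intro x b
    have h1 : (Function.update x i b) j = x j := Function.update_of_ne hj b x
    simp only [hG, h1, Function.update_comm hij, hr]
  have hpoint : ∀ x : Fin n → Bool,
      (if (DTree.node i l r).eval x
          = (DTree.node i l r).eval (Function.update x j (!x j)) then (0:ℝ) else 1)
        = if x i then G x else F x := by
    intro x
    have h1 : (Function.update x j (!x j)) i = x i := Function.update_of_ne hij _ x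
    cases hxb : x i with
    | true => simp [DTree.eval, h1, hxb, hG]
    | false => simp [DTree.eval, h1, hxb, hF]
  unfold Infi avg
  rw [Finset.sum_congr rfl fun x _ => hpoint x, sum_split i G F hGind hFind]
  ring

lemma totalInf_node_le {n : ℕ} (i : Fin n) (l r : DTree n)
    (hl : ∀ x b, l.eval (Function.update x i b) = l.eval x)
    (hr : ∀ x b, r.eval (Function.update x i b) = r.eval x) :
    totalInf n (DTree.node i l r).eval
      ≤ 1 + (totalInf n l.eval + totalInf n r.eval) / 2 := by
  have hmem : i ∈ (Finset.univ : Finset (Fin n)) := Finset.mem_univ i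
  have hsplitT := Finset.add_sum_erase Finset.univ (Infi n (DTree.node i l r).eval) hmem
  have hsplitL := Finset.add_sum_erase Finset.univ (Infi n l.eval) hmem
  have hsplitR := Finset.add_sum_erase Finset.univ (Infi n r.eval) hmem
  have hLi : Infi n l.eval i = 0 := Infi_indep hl
  have hRi : Infi n r.eval i = 0 := Infi_indep hr
  have herase : ∑ j ∈ Finset.univ.erase i, Infi n (DTree.node i l r).eval j
      = ∑ j ∈ Finset.univ.erase i, (Infi n l.eval j + Infi n r.eval j) / 2 := by
    refine Finset.sum_congr rfl fun j hjmem => ?_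
    exact Infi_node i l r hl hr j (Finset.ne_of_mem_erase hjmem)
  have hTi : Infi n (DTree.node i l r).eval i ≤ 1 := Infi_le_one _ _ _
  have hsum : ∑ j ∈ Finset.univ.erase i, (Infi n l.eval j + Infi n r.eval j) / 2
      = (∑ j ∈ Finset.univ.erase i, Infi n l.eval j
          + ∑ j ∈ Finset.univ.erase i, Infi n r.eval j) / 2 := by
    rw [← Finset.sum_div, ← Finset.sum_add_distrib]
  rw [totalInf_eq_sum, totalInf_eq_sum, totalInf_eq_sum]
  linarith [hsplitT, hsplitL, hsplitR, herase, hsum, hTi, hLi, hRi]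

lemma logb_step {a b : ℕ} (ha : 1 ≤ a) (hb : 1 ≤ b) :
    1 + (Real.logb 2 a + Real.logb 2 b) / 2 ≤ Real.logb 2 (a + b : ℕ) := by
  have hA : (1:ℝ) ≤ (a:ℝ) := by exact_mod_cast ha
  have hB : (1:ℝ) ≤ (b:ℝ) := by exact_mod_cast hb
  have hA0 : (0:ℝ) < a := by linarith
  have hB0 : (0:ℝ) < b := by linarith
  have h24 : Real.logb 2 4 = 2 := by
    rw [show (4:ℝ) = 2 ^ (2:ℕ) by norm_num, Real.logb_pow]
    simp [Real.logb_self_eq_one]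
  have hmul : Real.logb 2 (4 * a * b) = 2 + Real.logb 2 a + Real.logb 2 b := by
    rw [Real.logb_mul (by positivity) (by positivity),
      Real.logb_mul (by norm_num) (by positivity), h24]
  have hsq : Real.logb 2 (((a:ℝ) + b) ^ 2) = 2 * Real.logb 2 ((a:ℝ) + b) := by
    rw [Real.logb_pow]; norm_num
  have hle : (4 * (a:ℝ) * b) ≤ ((a:ℝ) + b) ^ 2 := by nlinarith [sq_nonneg ((a:ℝ) - b)]
  have hmono : Real.logb 2 (4 * (a:ℝ) * b) ≤ Real.logb 2 (((a:ℝ) + b) ^ 2) :=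
    Real.logb_le_logb_of_le (by norm_num) (by positivity) hle
  rw [hmul, hsq] at hmono
  have hcast : ((a + b : ℕ) : ℝ) = (a:ℝ) + b := by push_cast; ring
  rw [hcast]
  linarith

lemma noRepeat_totalInf_le {n : ℕ} (T : DTree n) :
    ∀ s, T.noRepeat s → totalInf n T.eval ≤ Real.logb 2 T.leaves := by
  induction T with
  | leaf b =>
    intro s _
    have : totalInf n (DTree.leaf b).eval = 0 := by
      simp [totalInf, avg, DTree.eval]
    rw [this]
    simp [DTree.leaves]
  | node i l r ihl ihr =>
    intro s hs
    obtain ⟨his, hsl, hsr⟩ := hs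
    have hl : ∀ x b, l.eval (Function.update x i b) = l.eval x :=
      fun x b => DTree.noRepeat_eval_update l _ hsl i (Finset.mem_insert_self i s) x b
    have hr : ∀ x b, r.eval (Function.update x i b) = r.eval x :=
      fun x b => DTree.noRepeat_eval_update r _ hsr i (Finset.mem_insert_self i s) x b
    have h1 := totalInf_node_le i l r hl hr
    have h2 := ihl _ hsl
    have h3 := ihr _ hsr
    have h4 := logb_step l.leaves_pos r.leaves_pos
    calc totalInf n (DTree.node i l r).eval
        ≤ 1 + (totalInf n l.eval + totalInf n r.eval) / 2 := h1
      _ ≤ 1 + (Real.logb 2 l.leaves + Real.logb 2 r.leaves) / 2 := by linarith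
      _ ≤ Real.logb 2 (l.leaves + r.leaves : ℕ) := h4
      _ = Real.logb 2 (DTree.node i l r).leaves := by rfl


/-- a size-`s` decision tree has total influence at most `log₂ s`. -/
theorem stmt11 (n s : ℕ) (T : DTree n) (hs : T.leaves ≤ s) :
    totalInf n T.eval ≤ Real.logb 2 s := by
  set T' := T.prune ∅ (fun _ => false) with hT'
  have heval : T'.eval = T.eval := funext fun x => T.prune_eval ∅ _ x (by simp)
  have h1 : totalInf n T.eval ≤ Real.logb 2 T'.leaves := by
    rw [← heval]
    exact noRepeat_totalInf_le T' ∅ (T.prune_noRepeat ∅ _)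
  have h2 : ((T'.leaves : ℕ) : ℝ) ≤ (s : ℝ) := by
    exact_mod_cast le_trans (T.prune_leaves ∅ _) hs
  have h3 : (0:ℝ) < ((T'.leaves : ℕ) : ℝ) := by exact_mod_cast T'.leaves_pos
  exact h1.trans (Real.logb_le_logb_of_le (by norm_num) h3 h2)

end

end DTR
end
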